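/- For m ≠ 0 and 0 ≤ k ≤ n, the r-Whitney-Lah numbers satisfy L_{m,r}(n,k) = (1/(m^k k!)) Σ_{j=0}^k C(k,j)(−1)^{k−j} ∏_{i=0}^{n−1}(2r + jm + im). -/

import Mathlib

open Polynomial Finset

private lemma cast_desc (j k : ℕ) :
    ∏ t ∈ Finset.range k, ((j : ℝ) - t) = (j.descFactorial k : ℝ) := by
  induction k with
  | zero => simp
  | succ k ih =>
    rw [Finset.prod_range_succ, ih, Nat.descFactorial_succ]
    rcases lt_or_ge k j with h | h
    · rw [Nat.cast_mul, Nat.cast_sub h.le]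
      ring
    · have h0 : j - k = 0 := by omega
      rw [h0, Nat.zero_mul, Nat.cast_zero]
      rcases eq_or_lt_of_le h with h1 | h1
      · simp [h1]
      · rw [Nat.descFactorial_eq_zero_iff_lt.mpr h1]
        simp

private lemma alt_sum (d : ℕ) :
    ∑ i ∈ Finset.range (d + 1), (-1 : ℝ) ^ (d - i) * (d.choose i : ℝ)
      = if d = 0 then 1 else 0 := by
  have h := Int.alternating_sum_range_choose (n := d)
  have h2 : ∑ i ∈ Finset.range (d + 1), (-1 : ℝ) ^ i * (d.choose i : ℝ)
      = if d = 0 then 1 else 0 := by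
    have := congrArg (fun z : ℤ => (z : ℝ)) h
    push_cast at this
    simpa using this
  have h3 : ∀ i ∈ Finset.range (d + 1),
      (-1 : ℝ) ^ (d - i) * (d.choose i : ℝ)
        = (-1 : ℝ) ^ d * ((-1 : ℝ) ^ i * (d.choose i : ℝ)) := by
    intro i hi
    have hid : i ≤ d := by simpa using Nat.lt_succ_iff.mp (Finset.mem_range.mp hi)
    have : (-1 : ℝ) ^ d = (-1 : ℝ) ^ (d - i) * (-1 : ℝ) ^ i := by
      rw [← pow_add]
      congr 1
      omega
    rw [this]
    have hsq : ((-1 : ℝ) ^ i) * ((-1 : ℝ) ^ i) = 1 := by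
      rw [← pow_add, ← two_mul, pow_mul]
      norm_num
    linear_combination (-(-1 : ℝ) ^ (d - i) * (d.choose i : ℝ)) * hsq
  rw [Finset.sum_congr rfl h3, ← Finset.mul_sum, h2]
  by_cases hd : d = 0 <;> simp [hd]

private lemma key_sum (k k' : ℕ) :
    ∑ j ∈ Finset.range (k + 1), (k.choose j : ℝ) * (-1) ^ (k - j) * (j.descFactorial k' : ℝ)
      = if k' = k then (k.factorial : ℝ) else 0 := by
  rcases lt_or_ge k k' with hk | hk
  · rw [if_neg (by omega)]
    apply Finset.sum_eq_zero
    intro j hj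
    have : j < k' := by
      have := Finset.mem_range.mp hj; omega
    rw [Nat.descFactorial_eq_zero_iff_lt.mpr this]
    simp
  · -- k' ≤ k
    have hsub : ∑ j ∈ Finset.range (k + 1),
        (k.choose j : ℝ) * (-1) ^ (k - j) * (j.descFactorial k' : ℝ)
        = ∑ j ∈ Finset.Ico k' (k + 1),
        (k.choose j : ℝ) * (-1) ^ (k - j) * (j.descFactorial k' : ℝ) := by
      rw [Finset.range_eq_Ico]
      apply (Finset.sum_subset (Finset.Ico_subset_Ico (Nat.zero_le _) le_rfl) _).symm
      intro j hj hnj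
      have : j < k' := by
        simp only [Finset.mem_Ico] at hj hnj; omega
      rw [Nat.descFactorial_eq_zero_iff_lt.mpr this]
      simp
    rw [hsub, Finset.sum_Ico_eq_sum_range]
    have hlen : k + 1 - k' = (k - k') + 1 := by omega
    rw [hlen]
    have hterm : ∀ i ∈ Finset.range ((k - k') + 1),
        (k.choose (k' + i) : ℝ) * (-1) ^ (k - (k' + i)) * ((k' + i).descFactorial k' : ℝ)
        = ((k'.factorial : ℝ) * (k.choose k' : ℝ)) *
            ((-1 : ℝ) ^ ((k - k') - i) * ((k - k').choose i : ℝ)) := by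
      intro i hi
      have hik : i ≤ k - k' := Nat.lt_succ_iff.mp (Finset.mem_range.mp hi)
      have h1 : k' + i ≤ k := by omega
      have h2 : k' ≤ k' + i := Nat.le_add_right _ _
      have hcc : k.choose (k' + i) * (k' + i).choose k'
          = k.choose k' * (k - k').choose ((k' + i) - k') :=
        Nat.choose_mul h2
      have hdesc : (k' + i).descFactorial k' = k'.factorial * (k' + i).choose k' :=
        Nat.descFactorial_eq_factorial_mul_choose _ _
      have hidx : (k' + i) - k' = i := by omega
      have hpow : k - (k' + i) = (k - k') - i := by omega
      rw [hidx] at hcc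
      rw [hdesc, hpow]
      push_cast
      have : (k.choose (k' + i) : ℝ) * ((k' + i).choose k' : ℝ)
          = (k.choose k' : ℝ) * ((k - k').choose i : ℝ) := by
        exact_mod_cast congrArg (fun z : ℕ => (z : ℝ)) hcc
      calc (k.choose (k' + i) : ℝ) * (-1) ^ (k - k' - i) *
            ((k'.factorial : ℝ) * ((k' + i).choose k' : ℝ))
          = ((k.choose (k' + i) : ℝ) * ((k' + i).choose k' : ℝ)) *
            ((-1) ^ (k - k' - i) * (k'.factorial : ℝ)) := by ring
        _ = ((k.choose k' : ℝ) * ((k - k').choose i : ℝ)) *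
            ((-1) ^ (k - k' - i) * (k'.factorial : ℝ)) := by rw [this]
        _ = ((k'.factorial : ℝ) * (k.choose k' : ℝ)) *
            ((-1 : ℝ) ^ ((k - k') - i) * ((k - k').choose i : ℝ)) := by ring
    rw [Finset.sum_congr rfl hterm, ← Finset.mul_sum, alt_sum]
    by_cases hkk : k' = k
    · subst hkk
      simp
    · have : k - k' ≠ 0 := by omega
      rw [if_neg this, if_neg hkk, mul_zero]

theorem stmt17 (m r : ℝ) (hm : m ≠ 0)
    (L : ℕ → ℕ → ℝ)
    (hL : ∀ n : ℕ, ∏ i ∈ Finset.range n, (Polynomial.X + Polynomial.C (r + i * m))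
      = ∑ k ∈ Finset.range (n + 1), Polynomial.C (L n k) * ∏ j ∈ Finset.range k, (Polynomial.X - Polynomial.C (r + j * m)))
    (n k : ℕ) (hkn : k ≤ n) :
    L n k = (1 / (m ^ k * (Nat.factorial k : ℝ))) *
      ∑ j ∈ Finset.range (k + 1), (Nat.choose k j : ℝ) * (-1) ^ (k - j) *
        ∏ i ∈ Finset.range n, (2 * r + j * m + i * m) := by
  have ha : ∀ j : ℕ, ∏ i ∈ Finset.range n, (2 * r + j * m + i * m)
      = ∑ k' ∈ Finset.range (n + 1), L n k' * (m ^ k' * (j.descFactorial k' : ℝ)) := by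
    intro j
    have h := congrArg (Polynomial.eval (r + j * m)) (hL n)
    simp only [Polynomial.eval_prod, Polynomial.eval_finset_sum, Polynomial.eval_mul,
      Polynomial.eval_C, Polynomial.eval_add, Polynomial.eval_sub, Polynomial.eval_X] at h
    calc ∏ i ∈ Finset.range n, (2 * r + j * m + i * m)
        = ∏ i ∈ Finset.range n, (r + j * m + (r + i * m)) := by
          apply Finset.prod_congr rfl; intro i _; ring
      _ = ∑ k' ∈ Finset.range (n + 1), L n k' *
            ∏ t ∈ Finset.range k', (r + j * m - (r + t * m)) := h
      _ = ∑ k' ∈ Finset.range (n + 1), L n k' * (m ^ k' * (j.descFactorial k' : ℝ)) := by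
          apply Finset.sum_congr rfl
          intro k' _
          congr 1
          calc ∏ t ∈ Finset.range k', (r + j * m - (r + t * m))
              = ∏ t ∈ Finset.range k', (((j : ℝ) - t) * m) := by
                apply Finset.prod_congr rfl; intro t _; ring
            _ = (∏ t ∈ Finset.range k', ((j : ℝ) - t)) * m ^ k' := by
                simp [Finset.prod_mul_distrib, Finset.prod_const, Finset.card_range]
            _ = m ^ k' * (j.descFactorial k' : ℝ) := by rw [cast_desc]; ring
  have hS : ∑ j ∈ Finset.range (k + 1), (Nat.choose k j : ℝ) * (-1) ^ (k - j) *
        ∏ i ∈ Finset.range n, (2 * r + j * m + i * m)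
      = L n k * (m ^ k * (Nat.factorial k : ℝ)) := by
    calc ∑ j ∈ Finset.range (k + 1), (Nat.choose k j : ℝ) * (-1) ^ (k - j) *
          ∏ i ∈ Finset.range n, (2 * r + j * m + i * m)
        = ∑ j ∈ Finset.range (k + 1), ∑ k' ∈ Finset.range (n + 1),
            L n k' * m ^ k' *
              ((Nat.choose k j : ℝ) * (-1) ^ (k - j) * (j.descFactorial k' : ℝ)) := by
          apply Finset.sum_congr rfl
          intro j _
          rw [ha j, Finset.mul_sum]
          apply Finset.sum_congr rfl
          intro k' _
          ring
      _ = ∑ k' ∈ Finset.range (n + 1), ∑ j ∈ Finset.range (k + 1),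
            L n k' * m ^ k' *
              ((Nat.choose k j : ℝ) * (-1) ^ (k - j) * (j.descFactorial k' : ℝ)) :=
          Finset.sum_comm
      _ = ∑ k' ∈ Finset.range (n + 1), L n k' * m ^ k' *
            (if k' = k then (k.factorial : ℝ) else 0) := by
          apply Finset.sum_congr rfl
          intro k' _
          rw [← Finset.mul_sum, key_sum]
      _ = L n k * (m ^ k * (Nat.factorial k : ℝ)) := by
          rw [Finset.sum_eq_single k]
          · rw [if_pos rfl]; ring
          · intro b _ hbk; rw [if_neg hbk, mul_zero]
          · intro habs; exact absurd (Finset.mem_range.mpr (by omega)) habs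
  rw [hS]
  have h1 : (m : ℝ) ^ k ≠ 0 := pow_ne_zero _ hm
  have h2 : (Nat.factorial k : ℝ) ≠ 0 := Nat.cast_ne_zero.mpr k.factorial_ne_zero
  field_simp
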